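/- Let β ∈ ℝ and let g : ℝ → [0,∞) be continuous and 2π-periodic. On a probability space carrying i.i.d. standard complex Gaussians (Z_j)_{j≥1}, define Y_k = ∫_0^{2π} g(θ) e^{β X_k(θ) − (β²/2) E[X_k(θ)²]} dθ for k ≥ 1. Then the sequence (Y_k)_{k≥1} converges almost surely as k → ∞. -/

import Mathlib

open MeasureTheory Filter Finset
open ProbabilityTheory
open scoped ENNReal NNReal

noncomputable section

/-- `ee x = exp(i x)`. -/
def ee (x : ℝ) : ℂ := Complex.exp (Complex.I * x)

/-- The law of a standard complex Gaussian `Z = A + iB`, with `A, B` independent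
real centered Gaussians of variance `1/2`. -/
def stdComplexGaussian : Measure ℂ :=
  Measure.map (fun p : ℝ × ℝ => (p.1 : ℂ) + p.2 * Complex.I)
    ((ProbabilityTheory.gaussianReal 0 (1/2)).prod (ProbabilityTheory.gaussianReal 0 (1/2)))

/-- The truncated field `X_k(θ)` built from the sequence `Z`. -/
def XfieldSeq {Ω : Type*} (Z : ℕ → Ω → ℂ) (k : ℕ) (θ : ℝ) (ω : Ω) : ℝ :=
  ((1/2 : ℂ) * ∑ j ∈ Finset.Icc 1 k, (1 / (Real.sqrt j : ℂ)) *
      (Z j ω * ee (j * θ) + (starRingEnd ℂ) (Z j ω) * ee (-(j * θ)))).re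

/-- `Y_k = ∫_0^{2π} g(θ) e^{β X_k(θ) - (β²/2) E[X_k(θ)²]} dθ`. -/
def Yseq {Ω : Type*} (β : ℝ) (g : ℝ → ℝ) (Z : ℕ → Ω → ℂ) (k : ℕ) (ω : Ω) : ℝ :=
  ∫ θ in (0:ℝ)..(2 * Real.pi),
    g θ * Real.exp (β * XfieldSeq Z k θ ω -
      (β ^ 2 / 2) * ((1/2) * ∑ j ∈ Finset.Icc 1 k, (1 : ℝ) / j))

namespace GMC

lemma pdf_shift (t x : ℝ) :
    Real.exp (t * x) * gaussianPDFReal 0 (1/2) x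
      = Real.exp (t ^ 2 / 4) * gaussianPDFReal (t/2) (1/2) x := by
  simp only [gaussianPDFReal]
  rw [mul_left_comm, mul_left_comm (Real.exp (t ^ 2 / 4))]
  congr 1
  rw [← Real.exp_add, ← Real.exp_add]
  congr 1
  push_cast
  ring

lemma gaussianReal_half :
    gaussianReal 0 (1/2) = volume.withDensity (gaussianPDF 0 (1/2)) :=
  gaussianReal_of_var_ne_zero 0 (by norm_num)

lemma integrable_exp_mul_gauss (t : ℝ) :
    Integrable (fun x => Real.exp (t * x)) (gaussianReal 0 (1/2)) := by
  rw [gaussianReal_half, gaussianPDF_def]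
  rw [integrable_withDensity_iff ((measurable_gaussianPDFReal 0 (1/2)).ennreal_ofReal)
    (ae_of_all _ fun x => ENNReal.ofReal_lt_top)]
  have : (fun x => Real.exp (t * x) * (ENNReal.ofReal (gaussianPDFReal 0 (1/2) x)).toReal)
      = fun x => Real.exp (t ^ 2 / 4) * gaussianPDFReal (t/2) (1/2) x := by
    funext x
    rw [ENNReal.toReal_ofReal (gaussianPDFReal_nonneg _ _ _), pdf_shift]
  rw [this]
  exact (integrable_gaussianPDFReal _ _).const_mul _

lemma integral_exp_mul_gauss (t : ℝ) :
    ∫ x, Real.exp (t * x) ∂(gaussianReal 0 (1/2)) = Real.exp (t ^ 2 / 4) := by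
  rw [gaussianReal_half]
  have hd : gaussianPDF 0 (1/2) = fun x => ((Real.toNNReal (gaussianPDFReal 0 (1/2) x) : ℝ≥0) : ℝ≥0∞) := rfl
  rw [hd, integral_withDensity_eq_integral_smul
    ((measurable_gaussianPDFReal 0 (1/2)).real_toNNReal)]
  have : (fun x => Real.toNNReal (gaussianPDFReal 0 (1/2) x) • Real.exp (t * x))
      = fun x => Real.exp (t ^ 2 / 4) * gaussianPDFReal (t/2) (1/2) x := by
    funext x
    rw [NNReal.smul_def, Real.coe_toNNReal _ (gaussianPDFReal_nonneg _ _ _), smul_eq_mul,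
      mul_comm (gaussianPDFReal 0 (1/2) x), pdf_shift]
  rw [this, integral_const_mul, integral_gaussianPDFReal_eq_one _ (by norm_num), mul_one]

end GMC

namespace GMC

lemma continuous_ee : Continuous ee :=
  Complex.continuous_exp.comp (continuous_const.mul Complex.continuous_ofReal)

lemma ee_re (x : ℝ) : (ee x).re = Real.cos x := by
  simp [ee, Complex.exp_re]

lemma ee_im (x : ℝ) : (ee x).im = Real.sin x := by
  simp [ee, Complex.exp_im]

lemma abs_ee (x : ℝ) : ‖ee x‖ = 1 := by
  simp [ee, Complex.norm_exp]

lemma measurable_mk : Measurable (fun p : ℝ × ℝ => (p.1 : ℂ) + p.2 * Complex.I) := by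
  fun_prop

lemma re_mk (p : ℝ × ℝ) (φ : ℝ) :
    ((((p.1 : ℂ) + p.2 * Complex.I)) * ee φ).re
      = (Real.cos φ) * p.1 + (-Real.sin φ) * p.2 := by
  simp [Complex.add_re, Complex.mul_re, ee_re, ee_im]
  ring

lemma integrable_exp_re_std (t φ : ℝ) :
    Integrable (fun z : ℂ => Real.exp (t * (z * ee φ).re)) stdComplexGaussian := by
  unfold stdComplexGaussian
  rw [integrable_map_measure
    (Continuous.aestronglyMeasurable (by
      exact Real.continuous_exp.comp (continuous_const.mul
        (Complex.continuous_re.comp ((continuous_id.mul continuous_const))))))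
    measurable_mk.aemeasurable]
  have : ((fun z : ℂ => Real.exp (t * (z * ee φ).re)) ∘ fun p : ℝ × ℝ => (p.1 : ℂ) + p.2 * Complex.I)
      = fun p : ℝ × ℝ => Real.exp ((t * Real.cos φ) * p.1) * Real.exp ((-(t * Real.sin φ)) * p.2) := by
    funext p
    simp only [Function.comp_apply, re_mk, ← Real.exp_add]
    ring_nf
  rw [this]
  exact (integrable_exp_mul_gauss _).mul_prod (integrable_exp_mul_gauss _)

lemma integral_exp_re_std (t φ : ℝ) :
    ∫ z, Real.exp (t * (z * ee φ).re) ∂stdComplexGaussian = Real.exp (t ^ 2 / 4) := by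
  unfold stdComplexGaussian
  rw [integral_map measurable_mk.aemeasurable
    (Continuous.aestronglyMeasurable (by
      exact Real.continuous_exp.comp (continuous_const.mul
        (Complex.continuous_re.comp ((continuous_id.mul continuous_const))))))]
  have : (fun p : ℝ × ℝ => Real.exp (t * ((((p.1 : ℂ) + p.2 * Complex.I)) * ee φ).re))
      = fun p : ℝ × ℝ => Real.exp ((t * Real.cos φ) * p.1) * Real.exp ((-(t * Real.sin φ)) * p.2) := by
    funext p
    rw [re_mk, ← Real.exp_add]
    ring_nf
  rw [this, integral_prod_mul (f := fun a => Real.exp (t * Real.cos φ * a))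
    (g := fun b => Real.exp (-(t * Real.sin φ) * b)), integral_exp_mul_gauss, integral_exp_mul_gauss, ← Real.exp_add]
  congr 1
  have h := Real.sin_sq_add_cos_sq φ
  nlinarith [h]

end GMC

namespace GMC

def nfun {Ω : Type*} (β : ℝ) (Z : ℕ → Ω → ℂ) (j : ℕ) (θ : ℝ) (ω : Ω) : ℝ :=
  Real.exp (β * ((1 / Real.sqrt j) * (Z j ω * ee (j * θ)).re) - β ^ 2 / (4 * j))

lemma Xfield_eq {Ω : Type*} (Z : ℕ → Ω → ℂ) (k : ℕ) (θ : ℝ) (ω : Ω) :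
    XfieldSeq Z k θ ω
      = ∑ j ∈ Finset.Icc 1 k, (1 / Real.sqrt j) * (Z j ω * ee (j * θ)).re := by
  unfold XfieldSeq
  have h : ((1/2 : ℂ) * ∑ j ∈ Finset.Icc 1 k, (1 / (Real.sqrt j : ℂ)) *
      (Z j ω * ee (j * θ) + (starRingEnd ℂ) (Z j ω) * ee (-(j * θ))))
      = ((∑ j ∈ Finset.Icc 1 k, (1 / Real.sqrt j) * (Z j ω * ee (j * θ)).re : ℝ) : ℂ) := by
    push_cast
    rw [Finset.mul_sum]
    refine Finset.sum_congr rfl fun j hj => ?_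
    have he : ee (-(j * θ)) = (starRingEnd ℂ) (ee (j * θ)) := by
      unfold ee
      rw [← Complex.exp_conj]
      congr 1
      simp only [map_mul, Complex.conj_I, Complex.conj_ofReal]
      push_cast
      ring
    rw [he, ← map_mul, Complex.add_conj]
    push_cast
    ring
  rw [h, Complex.ofReal_re]

lemma exp_eq_prod {Ω : Type*} (β : ℝ) (Z : ℕ → Ω → ℂ) (k : ℕ) (θ : ℝ) (ω : Ω) :
    Real.exp (β * XfieldSeq Z k θ ω -
        (β ^ 2 / 2) * ((1/2) * ∑ j ∈ Finset.Icc 1 k, (1 : ℝ) / j))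
      = ∏ j ∈ Finset.Icc 1 k, nfun β Z j θ ω := by
  unfold nfun
  rw [← Real.exp_sum, Xfield_eq]
  congr 1
  rw [Finset.sum_sub_distrib]
  congr 1
  · rw [Finset.mul_sum]
  · rw [Finset.mul_sum, Finset.mul_sum]
    exact Finset.sum_congr rfl fun j _ => by ring

lemma Yseq_eq {Ω : Type*} (β : ℝ) (g : ℝ → ℝ) (Z : ℕ → Ω → ℂ) (k : ℕ) (ω : Ω) :
    Yseq β g Z k ω
      = ∫ θ in (0:ℝ)..(2 * Real.pi), g θ * ∏ j ∈ Finset.Icc 1 k, nfun β Z j θ ω := by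
  unfold Yseq
  refine intervalIntegral.integral_congr fun θ _ => ?_
  rw [exp_eq_prod]

section Omega

variable {Ω : Type*} {mΩ : MeasurableSpace Ω} {P : Measure Ω} {Z : ℕ → Ω → ℂ}

lemma continuous_expre (t φ : ℝ) :
    Continuous fun z : ℂ => Real.exp (t * (z * ee φ).re) :=
  Real.continuous_exp.comp (continuous_const.mul
    (Complex.continuous_re.comp (continuous_id.mul continuous_const)))

lemma integrable_exp_reZ (hmeas : ∀ j, Measurable (Z j))
    (hlaw : ∀ j, Measure.map (Z j) P = stdComplexGaussian) (j : ℕ) (t φ : ℝ) :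
    Integrable (fun ω => Real.exp (t * (Z j ω * ee φ).re)) P := by
  have h := integrable_exp_re_std t φ
  rw [← hlaw j, integrable_map_measure (continuous_expre t φ).aestronglyMeasurable
    (hmeas j).aemeasurable] at h
  exact h

lemma integral_exp_reZ (hmeas : ∀ j, Measurable (Z j))
    (hlaw : ∀ j, Measure.map (Z j) P = stdComplexGaussian) (j : ℕ) (t φ : ℝ) :
    ∫ ω, Real.exp (t * (Z j ω * ee φ).re) ∂P = Real.exp (t ^ 2 / 4) := by
  rw [← integral_exp_re_std t φ, ← hlaw j,
    integral_map (hmeas j).aemeasurable (continuous_expre t φ).aestronglyMeasurable]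

lemma nfun_eq (β : ℝ) (j : ℕ) (θ : ℝ) :
    nfun β Z j θ = fun ω =>
      Real.exp (-(β ^ 2 / (4 * j))) * Real.exp ((β / Real.sqrt j) * (Z j ω * ee (j * θ)).re) := by
  funext ω
  unfold nfun
  rw [← Real.exp_add]
  congr 1
  ring

lemma integrable_nfun (hmeas : ∀ j, Measurable (Z j))
    (hlaw : ∀ j, Measure.map (Z j) P = stdComplexGaussian) (β : ℝ) (j : ℕ) (θ : ℝ) :
    Integrable (nfun β Z j θ) P := by
  rw [nfun_eq]
  exact (integrable_exp_reZ hmeas hlaw j _ _).const_mul _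

lemma integral_nfun (hmeas : ∀ j, Measurable (Z j))
    (hlaw : ∀ j, Measure.map (Z j) P = stdComplexGaussian) (β : ℝ) {j : ℕ} (hj : 1 ≤ j)
    (θ : ℝ) : ∫ ω, nfun β Z j θ ω ∂P = 1 := by
  simp only [nfun_eq]
  rw [integral_const_mul, integral_exp_reZ hmeas hlaw, ← Real.exp_add]
  have hj0 : (0:ℝ) < (j:ℝ) := by exact_mod_cast hj
  have hs : (β / Real.sqrt j) ^ 2 = β ^ 2 / j := by
    rw [div_pow, Real.sq_sqrt hj0.le]
  rw [hs]
  rw [show -(β ^ 2 / (4 * (j:ℝ))) + β ^ 2 / (j:ℝ) / 4 = 0 by field_simp; ring, Real.exp_zero]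

end Omega
end GMC

namespace GMC
section Omega2

variable {Ω : Type*} {mΩ : MeasurableSpace Ω} {P : Measure Ω} [IsProbabilityMeasure P] {Z : ℕ → Ω → ℂ}

lemma indep_prod (hindep : ProbabilityTheory.iIndepFun Z P)
    (hmeas : ∀ j, Measurable (Z j)) (f : ℕ → ℂ → ℝ) (hf : ∀ j, Measurable (f j))
    (hint : ∀ j, Integrable (fun ω => f j (Z j ω)) P) (s : Finset ℕ) :
    Integrable (fun ω => ∏ j ∈ s, f j (Z j ω)) P ∧
      ∫ ω, (∏ j ∈ s, f j (Z j ω)) ∂P = ∏ j ∈ s, ∫ ω, f j (Z j ω) ∂P := by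
  classical
  induction s using Finset.cons_induction with
  | empty => simp
  | cons a s ha ih =>
    have hcomp : ProbabilityTheory.iIndepFun
        (fun j => f j ∘ Z j) P := hindep.comp f hf
    have hIF : ProbabilityTheory.IndepFun (∏ j ∈ s, (f j ∘ Z j)) (f a ∘ Z a) P :=
      hcomp.indepFun_finsetProd_of_notMem (fun j => (hf j).comp (hmeas j)) ha
    have hprodeq : (∏ j ∈ s, (f j ∘ Z j)) = fun ω => ∏ j ∈ s, f j (Z j ω) := by
      funext ω; simp
    rw [hprodeq] at hIF
    have hint2 : Integrable (fun ω => ∏ j ∈ s, f j (Z j ω)) P := ih.1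
    have heq : (fun ω => ∏ j ∈ Finset.cons a s ha, f j (Z j ω))
        = fun ω => (∏ j ∈ s, f j (Z j ω)) * f a (Z a ω) := by
      funext ω; rw [Finset.prod_cons]; ring
    constructor
    · rw [heq]
      exact hIF.integrable_mul hint2 (hint a)
    · have hmul := hIF.integral_fun_mul_eq_mul_integral hint2.aestronglyMeasurable (hint a).aestronglyMeasurable
      have hmul' : ∫ ω, (∏ j ∈ s, f j (Z j ω)) * f a (Z a ω) ∂P
          = (∫ ω, ∏ j ∈ s, f j (Z j ω) ∂P) * ∫ ω, f a (Z a ω) ∂P := hmul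
      rw [heq, hmul', ih.2, Finset.prod_cons, mul_comm]

lemma continuous_expabs (c : ℝ) : Continuous fun z : ℂ => Real.exp (c * ‖z‖) :=
  Real.continuous_exp.comp (continuous_const.mul continuous_norm)

lemma continuous_mk : Continuous fun p : ℝ × ℝ => (p.1 : ℂ) + p.2 * Complex.I :=
  (Complex.continuous_ofReal.comp continuous_fst).add
    ((Complex.continuous_ofReal.comp continuous_snd).mul continuous_const)

lemma integrable_exp_abs_std {c : ℝ} (hc : 0 ≤ c) :
    Integrable (fun z : ℂ => Real.exp (c * ‖z‖)) stdComplexGaussian := by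
  unfold stdComplexGaussian
  rw [integrable_map_measure
    ((continuous_expabs c).aestronglyMeasurable)
    measurable_mk.aemeasurable]
  have hexple : ∀ x : ℝ, Real.exp (c * |x|) ≤ Real.exp (c * x) + Real.exp (-(c * x)) := by
    intro x
    rcases abs_cases x with ⟨h, _⟩ | ⟨h, _⟩
    · rw [h]; nlinarith [Real.exp_pos (-(c * x))]
    · rw [h, mul_neg]; nlinarith [Real.exp_pos (c * x)]
  apply Integrable.mono' (g := fun p : ℝ × ℝ =>
    (Real.exp (c * p.1) + Real.exp (-(c * p.1))) * (Real.exp (c * p.2) + Real.exp (-(c * p.2))))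
  · have h1 : Integrable (fun x : ℝ => Real.exp (c * x) + Real.exp (-(c * x)))
        (ProbabilityTheory.gaussianReal 0 (1/2)) := by
      refine (integrable_exp_mul_gauss c).add ?_
      simpa [neg_mul] using integrable_exp_mul_gauss (-c)
    exact h1.mul_prod h1
  · exact ((continuous_expabs c).comp continuous_mk).aestronglyMeasurable
  · refine ae_of_all _ fun p => ?_
    simp only [Function.comp_apply]
    have habs : ‖(p.1 : ℂ) + p.2 * Complex.I‖ ≤ |p.1| + |p.2| := by
      refine le_trans (Complex.norm_le_abs_re_add_abs_im _) ?_
      simp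
    rw [Real.norm_eq_abs, Real.abs_exp]
    calc Real.exp (c * ‖(p.1 : ℂ) + p.2 * Complex.I‖)
        ≤ Real.exp (c * (|p.1| + |p.2|)) :=
          Real.exp_le_exp.2 (mul_le_mul_of_nonneg_left habs hc)
      _ = Real.exp (c * |p.1|) * Real.exp (c * |p.2|) := by
          rw [← Real.exp_add]; ring_nf
      _ ≤ _ := by
          refine mul_le_mul (hexple p.1) (hexple p.2) (Real.exp_pos _).le ?_
          positivity

lemma integrable_exp_absZ (hmeas : ∀ j, Measurable (Z j))
    (hlaw : ∀ j, Measure.map (Z j) P = stdComplexGaussian) {c : ℝ} (hc : 0 ≤ c) (j : ℕ) :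
    Integrable (fun ω => Real.exp (c * ‖Z j ω‖)) P := by
  have h := integrable_exp_abs_std hc
  rw [← hlaw j, integrable_map_measure
    ((continuous_expabs c).aestronglyMeasurable)
    (hmeas j).aemeasurable] at h
  exact h

def Hfun {Ω : Type*} (β : ℝ) (Z : ℕ → Ω → ℂ) (k : ℕ) (ω : Ω) : ℝ :=
  ∏ j ∈ Finset.Icc 1 k, Real.exp (|β| / Real.sqrt j * ‖Z j ω‖)

lemma Hfun_nonneg (β : ℝ) (k : ℕ) (ω : Ω) : 0 ≤ Hfun β Z k ω :=
  Finset.prod_nonneg fun j _ => (Real.exp_pos _).le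

lemma integrable_Hfun (hindep : ProbabilityTheory.iIndepFun Z P)
    (hmeas : ∀ j, Measurable (Z j))
    (hlaw : ∀ j, Measure.map (Z j) P = stdComplexGaussian) (β : ℝ) (k : ℕ) :
    Integrable (Hfun β Z k) P :=
  (indep_prod hindep hmeas (fun j z => Real.exp (|β| / Real.sqrt j * ‖z‖))
    (fun j => (Real.continuous_exp.comp
      (continuous_const.mul continuous_norm)).measurable)
    (fun j => integrable_exp_absZ hmeas hlaw (by positivity) j) _).1

lemma nfun_le (β : ℝ) (j : ℕ) (θ : ℝ) (ω : Ω) :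
    |nfun β Z j θ ω| ≤ Real.exp (|β| / Real.sqrt j * ‖Z j ω‖) := by
  unfold nfun
  rw [Real.abs_exp]
  apply Real.exp_le_exp.2
  have hr : |(Z j ω * ee (j * θ)).re| ≤ ‖Z j ω‖ := by
    calc |(Z j ω * ee (j * θ)).re| ≤ ‖Z j ω * ee (j * θ)‖ :=
          Complex.abs_re_le_norm _
      _ = ‖Z j ω‖ * 1 := by rw [norm_mul, abs_ee]
      _ = ‖Z j ω‖ := mul_one _
  have hs : (0:ℝ) ≤ 1 / Real.sqrt j := by positivity
  have h1 : β * ((1 / Real.sqrt j) * (Z j ω * ee (j * θ)).re)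
      ≤ |β| / Real.sqrt j * ‖Z j ω‖ := by
    calc β * ((1 / Real.sqrt j) * (Z j ω * ee (j * θ)).re)
        ≤ |β * ((1 / Real.sqrt j) * (Z j ω * ee (j * θ)).re)| := le_abs_self _
      _ = |β| * ((1 / Real.sqrt j) * |(Z j ω * ee (j * θ)).re|) := by
          rw [abs_mul, abs_mul, abs_of_nonneg hs]
      _ ≤ |β| * ((1 / Real.sqrt j) * ‖Z j ω‖) := by
          refine mul_le_mul_of_nonneg_left (mul_le_mul_of_nonneg_left hr hs) (abs_nonneg β)
      _ = |β| / Real.sqrt j * ‖Z j ω‖ := by ring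
  have h2 : (0:ℝ) ≤ β ^ 2 / (4 * j) := by positivity
  linarith

end Omega2
end GMC

namespace GMC
section Meas

variable {Ω : Type*} {g : ℝ → ℝ}

lemma measurable_uncurry_G {m : MeasurableSpace Ω} (hg : Measurable g)
    (β : ℝ) (Z : ℕ → Ω → ℂ) (k : ℕ) (hZ : ∀ j, j ∈ Finset.Icc 1 k → Measurable[m] (Z j)) :
    Measurable fun p : Ω × ℝ => g p.2 * ∏ j ∈ Finset.Icc 1 k, nfun β Z j p.2 p.1 := by
  apply Measurable.mul (hg.comp measurable_snd)
  apply Finset.measurable_prod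
  intro j hj
  unfold nfun
  have h1 : Measurable fun p : Ω × ℝ => (Z j p.1 * ee (j * p.2)).re :=
    Complex.measurable_re.comp (((hZ j hj).comp measurable_fst).mul
      ((continuous_ee.comp (continuous_const.mul continuous_id)).measurable.comp measurable_snd))
  exact Real.measurable_exp.comp
    ((measurable_const.mul (measurable_const.mul h1)).sub measurable_const)

lemma measurable_G_omega {m : MeasurableSpace Ω} (hg : Measurable g)
    (β : ℝ) (Z : ℕ → Ω → ℂ) (k : ℕ) (hZ : ∀ j, j ∈ Finset.Icc 1 k → Measurable[m] (Z j))
    (θ : ℝ) :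
    Measurable[m] fun ω => g θ * ∏ j ∈ Finset.Icc 1 k, nfun β Z j θ ω :=
  (measurable_uncurry_G hg β Z k hZ).comp (measurable_id.prodMk measurable_const)

lemma continuous_G_theta (hgc : Continuous g) {Z : ℕ → Ω → ℂ} (β : ℝ) (k : ℕ) (ω : Ω) :
    Continuous fun θ => g θ * ∏ j ∈ Finset.Icc 1 k, nfun β Z j θ ω := by
  apply hgc.mul
  apply continuous_finset_prod
  intro j _
  unfold nfun
  exact Real.continuous_exp.comp ((continuous_const.mul (continuous_const.mul
    (Complex.continuous_re.comp (continuous_const.mul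
      (continuous_ee.comp (continuous_const.mul continuous_id)))))).sub continuous_const)

lemma G_bound {Z : ℕ → Ω → ℂ} {C : ℝ} (hC : ∀ x ∈ Set.Icc (0:ℝ) (2*Real.pi), ‖g x‖ ≤ C)
    (β : ℝ) (k : ℕ) {θ : ℝ} (hθ : θ ∈ Set.Ioc (0:ℝ) (2*Real.pi)) (ω : Ω) :
    ‖g θ * ∏ j ∈ Finset.Icc 1 k, nfun β Z j θ ω‖ ≤ C * Hfun β Z k ω := by
  rw [Real.norm_eq_abs, abs_mul]
  refine mul_le_mul (by rw [← Real.norm_eq_abs]; exact hC θ (Set.mem_Icc_of_Ioc hθ)) ?_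
    (abs_nonneg _) ?_
  · rw [Finset.abs_prod]
    exact Finset.prod_le_prod (fun j _ => abs_nonneg _) fun j _ => nfun_le β j θ ω
  · have h0 : (0:ℝ) ∈ Set.Icc (0:ℝ) (2*Real.pi) := ⟨le_refl _, by positivity⟩
    exact le_trans (norm_nonneg _) (hC 0 h0)

end Meas
end GMC

namespace GMC
section Main

variable {Ω : Type*} {mΩ : MeasurableSpace Ω} {P : Measure Ω} [IsProbabilityMeasure P]
  {Z : ℕ → Ω → ℂ} {g : ℝ → ℝ} {β : ℝ}

lemma nu_finite : IsFiniteMeasure (volume.restrict (Set.Ioc (0:ℝ) (2*Real.pi))) := by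
  constructor
  rw [Measure.restrict_apply_univ, Real.volume_Ioc]
  exact ENNReal.ofReal_lt_top

lemma Yseq_eq' (k : ℕ) (ω : Ω) :
    Yseq β g Z k ω = ∫ θ, (g θ * ∏ j ∈ Finset.Icc 1 k, nfun β Z j θ ω)
      ∂(volume.restrict (Set.Ioc (0:ℝ) (2*Real.pi))) := by
  rw [Yseq_eq, intervalIntegral.integral_of_le (by positivity : (0:ℝ) ≤ 2*Real.pi)]

lemma integrable_G_prodmeas (hindep : ProbabilityTheory.iIndepFun Z P)
    (hmeas : ∀ j, Measurable (Z j))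
    (hlaw : ∀ j, Measure.map (Z j) P = stdComplexGaussian)
    (hgc : Continuous g) (k : ℕ) (A : Set Ω) :
    Integrable (Function.uncurry fun ω θ => g θ * ∏ j ∈ Finset.Icc 1 k, nfun β Z j θ ω)
      ((P.restrict A).prod (volume.restrict (Set.Ioc (0:ℝ) (2*Real.pi)))) := by
  haveI := nu_finite
  obtain ⟨C, hC⟩ :=
    (isCompact_Icc (a := (0:ℝ)) (b := 2*Real.pi)).exists_bound_of_continuousOn hgc.continuousOn
  refine Integrable.mono' (g := fun p : Ω × ℝ => C * Hfun β Z k p.1) ?_ ?_ ?_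
  · have h1 : Integrable (fun ω => C * Hfun β Z k ω) (P.restrict A) :=
      ((integrable_Hfun hindep hmeas hlaw β k).restrict).const_mul C
    have h2 : Integrable (fun _ : ℝ => (1:ℝ))
        (volume.restrict (Set.Ioc (0:ℝ) (2*Real.pi))) := integrable_const 1
    simpa using h1.mul_prod h2
  · exact (measurable_uncurry_G hgc.measurable β Z k
      (fun j _ => hmeas j)).aestronglyMeasurable
  · have hprodnull : ((P.restrict A).prod (volume.restrict (Set.Ioc (0:ℝ) (2*Real.pi))))
        {p : Ω × ℝ | ¬ p.2 ∈ Set.Ioc (0:ℝ) (2*Real.pi)} = 0 := by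
      have hset : {p : Ω × ℝ | ¬ p.2 ∈ Set.Ioc (0:ℝ) (2*Real.pi)}
          = Set.univ ×ˢ (Set.Ioc (0:ℝ) (2*Real.pi))ᶜ := by
        ext p; simp
      rw [hset, Measure.prod_prod]
      have : (volume.restrict (Set.Ioc (0:ℝ) (2*Real.pi))) (Set.Ioc (0:ℝ) (2*Real.pi))ᶜ = 0 := by
        rw [Measure.restrict_apply measurableSet_Ioc.compl]
        simp
      rw [this, mul_zero]
    have hae : ∀ᵐ p : Ω × ℝ ∂((P.restrict A).prod (volume.restrict (Set.Ioc (0:ℝ) (2*Real.pi)))),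
        p.2 ∈ Set.Ioc (0:ℝ) (2*Real.pi) := by
      rw [ae_iff]; exact hprodnull
    filter_upwards [hae] with p hp
    exact G_bound hC β k hp p.1

lemma swap_G (hindep : ProbabilityTheory.iIndepFun Z P)
    (hmeas : ∀ j, Measurable (Z j))
    (hlaw : ∀ j, Measure.map (Z j) P = stdComplexGaussian)
    (hgc : Continuous g) (k : ℕ) (A : Set Ω) :
    ∫ ω in A, (∫ θ, (g θ * ∏ j ∈ Finset.Icc 1 k, nfun β Z j θ ω)
        ∂(volume.restrict (Set.Ioc (0:ℝ) (2*Real.pi)))) ∂P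
      = ∫ θ, (∫ ω in A, (g θ * ∏ j ∈ Finset.Icc 1 k, nfun β Z j θ ω) ∂P)
          ∂(volume.restrict (Set.Ioc (0:ℝ) (2*Real.pi))) :=
  integral_integral_swap (integrable_G_prodmeas hindep hmeas hlaw hgc k A)

lemma key_setIntegral
    (hindep : ProbabilityTheory.iIndepFun Z P)
    (hmeas : ∀ j, Measurable (Z j))
    (hlaw : ∀ j, Measure.map (Z j) P = stdComplexGaussian)
    (hgc : Continuous g) (k : ℕ) {A : Set Ω} (hA' : MeasurableSet A)
    (hIndepF : ∀ θ : ℝ, ProbabilityTheory.IndepFun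
      (A.indicator fun ω => g θ * ∏ j ∈ Finset.Icc 1 k, nfun β Z j θ ω)
      (nfun β Z (k+1) θ) P)
    (hXsm : ∀ θ : ℝ, AEStronglyMeasurable
      (A.indicator fun ω => g θ * ∏ j ∈ Finset.Icc 1 k, nfun β Z j θ ω) P) :
    ∫ ω in A, Yseq β g Z (k+1) ω ∂P = ∫ ω in A, Yseq β g Z k ω ∂P := by
  simp only [Yseq_eq']
  rw [swap_G hindep hmeas hlaw hgc (k+1) A, swap_G hindep hmeas hlaw hgc k A]
  refine integral_congr_ae (ae_of_all _ fun θ => ?_)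
  dsimp only
  rw [← integral_indicator hA', ← integral_indicator hA']
  have hsplit : ∀ ω : Ω, (∏ j ∈ Finset.Icc 1 (k+1), nfun β Z j θ ω)
      = (∏ j ∈ Finset.Icc 1 k, nfun β Z j θ ω) * nfun β Z (k+1) θ ω := fun ω =>
    Finset.prod_Icc_succ_top (Nat.succ_le_succ (Nat.zero_le k)) _
  set F := fun ω => g θ * ∏ j ∈ Finset.Icc 1 k, nfun β Z j θ ω with hF
  have hi : A.indicator (fun ω => g θ * ∏ j ∈ Finset.Icc 1 (k+1), nfun β Z j θ ω)
      = fun ω => A.indicator F ω * nfun β Z (k+1) θ ω := by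
    funext ω
    by_cases h : ω ∈ A
    · simp only [Set.indicator_of_mem h, hsplit ω, hF]; ring
    · simp [Set.indicator_of_notMem h]
  rw [hi]
  have hmul : ∫ ω, A.indicator F ω * nfun β Z (k+1) θ ω ∂P
      = (∫ ω, A.indicator F ω ∂P) * ∫ ω, nfun β Z (k+1) θ ω ∂P :=
    (hIndepF θ).integral_fun_mul_eq_mul_integral (hXsm θ)
      (integrable_nfun hmeas hlaw β (k+1) θ).aestronglyMeasurable
  rw [hmul, integral_nfun hmeas hlaw β (Nat.succ_le_succ (Nat.zero_le k)) θ, mul_one]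

lemma stronglyMeasurable_Y {m : MeasurableSpace Ω} (hgc : Continuous g) (k : ℕ)
    (hZm : ∀ j, j ∈ Finset.Icc 1 k → Measurable[m] (Z j)) :
    StronglyMeasurable[m] (Yseq β g Z k) := by
  have h : Yseq β g Z k = fun ω => ∫ θ, (g θ * ∏ j ∈ Finset.Icc 1 k, nfun β Z j θ ω)
      ∂(volume.restrict (Set.Ioc (0:ℝ) (2*Real.pi))) := funext fun ω => Yseq_eq' k ω
  rw [h]
  exact StronglyMeasurable.integral_prod_right'
    (f := fun p : Ω × ℝ => g p.2 * ∏ j ∈ Finset.Icc 1 k, nfun β Z j p.2 p.1)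
    ((measurable_uncurry_G hgc.measurable β Z k hZm).stronglyMeasurable)

lemma integrable_Y (hindep : ProbabilityTheory.iIndepFun Z P)
    (hmeas : ∀ j, Measurable (Z j))
    (hlaw : ∀ j, Measure.map (Z j) P = stdComplexGaussian)
    (hgc : Continuous g) (k : ℕ) :
    Integrable (Yseq β g Z k) P := by
  obtain ⟨C, hC⟩ :=
    (isCompact_Icc (a := (0:ℝ)) (b := 2*Real.pi)).exists_bound_of_continuousOn hgc.continuousOn
  refine Integrable.mono' (g := fun ω => C * Hfun β Z k ω * (2*Real.pi))
    (((integrable_Hfun hindep hmeas hlaw β k).const_mul C).mul_const (2*Real.pi))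
    ((stronglyMeasurable_Y hgc k (fun j _ => hmeas j)).aestronglyMeasurable)
    (ae_of_all _ fun ω => ?_)
  rw [Yseq_eq]
  have hb : ∀ θ ∈ Set.uIoc (0:ℝ) (2*Real.pi),
      ‖g θ * ∏ j ∈ Finset.Icc 1 k, nfun β Z j θ ω‖ ≤ C * Hfun β Z k ω := by
    intro θ hθ
    rw [Set.uIoc_of_le (by positivity : (0:ℝ) ≤ 2*Real.pi)] at hθ
    exact G_bound hC β k hθ ω
  have := intervalIntegral.norm_integral_le_of_norm_le_const hb
  rw [sub_zero, abs_of_nonneg (by positivity : (0:ℝ) ≤ 2*Real.pi)] at this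
  exact this

end Main
end GMC

theorem gmc_partial_sums_converge_ae {Ω : Type*} [MeasurableSpace Ω]
    (P : Measure Ω) [IsProbabilityMeasure P]
    (Z : ℕ → Ω → ℂ) (hmeas : ∀ j, Measurable (Z j))
    (hindep : ProbabilityTheory.iIndepFun Z P)
    (hlaw : ∀ j, Measure.map (Z j) P = stdComplexGaussian)
    (β : ℝ) (g : ℝ → ℝ) (hgc : Continuous g)
    (hgper : Function.Periodic g (2 * Real.pi)) (hgpos : ∀ x, 0 ≤ g x) :
    ∀ᵐ ω ∂P, ∃ l : ℝ, Tendsto (fun k : ℕ => Yseq β g Z k ω) atTop (nhds l) := by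
  classical
  have hsm : ∀ i, StronglyMeasurable (Z i) := fun i => (hmeas i).stronglyMeasurable
  set ℱ := MeasureTheory.Filtration.natural Z hsm with hℱ
  have hZm : ∀ k j, j ∈ Finset.Icc 1 k → Measurable[ℱ k] (Z j) := fun k j hj =>
    ((Filtration.stronglyAdapted_natural hsm j).mono (ℱ.mono (Finset.mem_Icc.mp hj).2)).measurable
  have hadp : ∀ k, StronglyMeasurable[ℱ k] (Yseq β g Z k) := fun k =>
    GMC.stronglyMeasurable_Y hgc k (hZm k)
  have hint : ∀ k, Integrable (Yseq β g Z k) P := fun k =>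
    GMC.integrable_Y hindep hmeas hlaw hgc k
  have hidp : ∀ k, Indep (MeasurableSpace.comap (Z (k+1)) inferInstance) (ℱ k) P :=
    fun k => hindep.indep_comap_natural_of_lt hsm (Nat.lt_succ_self k)
  have hcond : ∀ k, Yseq β g Z k =ᵐ[P] P[Yseq β g Z (k+1) | ℱ k] := by
    intro k
    refine ae_eq_condExp_of_forall_setIntegral_eq (ℱ.le k) (hint (k+1))
      (fun s _ _ => (hint k).integrableOn)
      (fun s hs _ => ?_) ((hadp k).aestronglyMeasurable)
    have hXm : ∀ θ : ℝ, Measurable[ℱ k]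
        (s.indicator fun ω => g θ * ∏ j ∈ Finset.Icc 1 k, GMC.nfun β Z j θ ω) := fun θ =>
      (GMC.measurable_G_omega hgc.measurable β Z k (hZm k) θ).indicator hs
    refine (GMC.key_setIntegral hindep hmeas hlaw hgc k (ℱ.le k s hs) ?_ ?_).symm
    · intro θ
      have hYm : Measurable[MeasurableSpace.comap (Z (k+1)) inferInstance]
          (GMC.nfun β Z (k+1) θ) := by
        have hb : Measurable fun z : ℂ =>
            Real.exp (β * ((1 / Real.sqrt ((k+1 : ℕ))) * (z * ee (((k+1 : ℕ)) * θ)).re)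
              - β ^ 2 / (4 * ((k+1 : ℕ)))) :=
          Real.measurable_exp.comp ((measurable_const.mul (measurable_const.mul
            (Complex.measurable_re.comp (measurable_id.mul measurable_const)))).sub
              measurable_const)
        exact hb.comp (Measurable.of_comap_le le_rfl)
      rw [ProbabilityTheory.IndepFun_iff_Indep]
      exact indep_of_indep_of_le_right
        (indep_of_indep_of_le_left (hidp k).symm (hXm θ).comap_le) hYm.comap_le
    · intro θ
      exact ((hXm θ).mono (ℱ.le k) le_rfl).aestronglyMeasurable
  have hmart : Martingale (fun k => Yseq β g Z k) ℱ P := martingale_nat hadp hint hcond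
  have hY0 : ∀ (m : ℕ) (ω : Ω), 0 ≤ Yseq β g Z m ω := fun m ω =>
    intervalIntegral.integral_nonneg (by positivity)
      (fun θ _ => mul_nonneg (hgpos θ) (Real.exp_pos _).le)
  have hsn : ∀ m : ℕ, eLpNorm (Yseq β g Z m) 1 P
      = ENNReal.ofReal (∫ ω, Yseq β g Z m ω ∂P) := by
    intro m
    rw [eLpNorm_one_eq_lintegral_enorm, ← ofReal_integral_norm_eq_lintegral_enorm (hint m)]
    congr 1
    refine integral_congr_ae (ae_of_all _ fun ω => ?_)
    simp only [Real.norm_eq_abs]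
    exact abs_of_nonneg (hY0 m ω)
  have hEeq : ∀ n : ℕ, ∫ ω, Yseq β g Z n ω ∂P = ∫ ω, Yseq β g Z 0 ω ∂P := by
    intro n
    have h := hmart.setIntegral_eq (Nat.zero_le n)
      (MeasurableSet.univ : MeasurableSet[ℱ 0] Set.univ)
    simpa [Measure.restrict_univ] using h.symm
  have hbdd : ∀ n : ℕ, eLpNorm (Yseq β g Z n) 1 P
      ≤ (ENNReal.ofReal (∫ ω, Yseq β g Z 0 ω ∂P)).toNNReal := by
    intro n
    rw [hsn n, hEeq n]
    exact le_of_eq (ENNReal.coe_toNNReal ENNReal.ofReal_ne_top).symm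
  have hconv := hmart.submartingale.exists_ae_tendsto_of_bdd hbdd
  filter_upwards [hconv] with ω hω
  exact hω


end
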